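/- For positive integers $n_1 \le n_2$ and probabilities $p_1, p_2 \in (0,1)$, the binomial distribution $\mathrm{Bin}(n_1,p_1)$ is stochastically dominated by $\mathrm{Bin}(n_2,p_2)$ if and only if $n_1 \le n_2$ and $(1-p_1)^{n_1} \ge (1-p_2)^{n_2}$. -/

import Mathlib

open Finset

/-- The upper tail `ℙ(Bin(n,p) ≥ x)` of a binomial random variable. -/
noncomputable def binomialTail (n : ℕ) (p : ℝ) (x : ℕ) : ℝ :=
  ∑ k ∈ Finset.Icc x n, (n.choose k : ℝ) * p ^ k * (1 - p) ^ (n - k)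


lemma BT.sum_pmf (n : ℕ) (p : ℝ) :
    ∑ k ∈ range (n+1), (n.choose k : ℝ) * p ^ k * (1 - p) ^ (n - k) = 1 := by
  have h := add_pow p (1-p) n
  simp only [add_sub_cancel, one_pow] at h
  calc ∑ k ∈ range (n+1), (n.choose k : ℝ) * p ^ k * (1 - p) ^ (n - k)
      = ∑ m ∈ range (n+1), p ^ m * (1 - p) ^ (n - m) * (n.choose m : ℝ) :=
        Finset.sum_congr rfl (fun k _ => by ring)
    _ = 1 := h.symm

lemma BT.Icc_zero (n : ℕ) : Icc 0 n = range (n+1) := by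
  ext k; simp [Nat.lt_succ_iff]

lemma BT.pmf_rec (n k : ℕ) (hk : k + 1 ≤ n) (p q : ℝ) :
    ((k:ℝ)+1) * q * ((n.choose (k+1) : ℝ) * p^(k+1) * q^(n-(k+1)))
      = ((n:ℝ) - k) * p * ((n.choose k : ℝ) * p^k * q^(n-k)) := by
  have hc : ((n.choose (k+1) : ℝ)) * ((k:ℝ)+1) = (n.choose k : ℝ) * ((n:ℝ) - k) := by
    have h := Nat.choose_succ_right_eq n k
    have h2 : ((n:ℝ) - k) = ((n - k : ℕ) : ℝ) := by
      rw [Nat.cast_sub (by omega)]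
    rw [h2]; exact_mod_cast h
  have hpow : q^(n-k) = q^(n-(k+1)) * q := by
    rw [← pow_succ]; congr 1; omega
  rw [hpow]
  linear_combination (q * q^(n-(k+1)) * p^(k+1)) * hc


lemma BT.single_crossing (N : ℕ) (f g : ℕ → ℝ)
    (hf : ∀ k, k ≤ N → 0 ≤ f k) (hg : ∀ k, k ≤ N → 0 ≤ g k)
    (hsum : ∑ k ∈ range (N+1), f k = ∑ k ∈ range (N+1), g k)
    (h0 : g 0 ≤ f 0)
    (hcross : ∀ k, 1 ≤ k → k + 1 ≤ N → f k ≤ g k → f (k+1) ≤ g (k+1)) :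
    ∀ x, ∑ k ∈ Icc x N, f k ≤ ∑ k ∈ Icc x N, g k := by
  intro x
  rcases Nat.eq_zero_or_pos x with rfl | hx
  · rw [BT.Icc_zero]; exact le_of_eq hsum
  by_cases hA : ∀ k ∈ Icc x N, f k ≤ g k
  · exact sum_le_sum hA
  push_neg at hA
  obtain ⟨k₀, hk₀mem, hk₀⟩ := hA
  rw [mem_Icc] at hk₀mem
  have hdown : ∀ j, 1 ≤ j → j ≤ k₀ → ¬ (f j ≤ g j) := by
    intro j hj1 hjk hfg
    have hprop : ∀ m, j ≤ m → m ≤ k₀ → f m ≤ g m := by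
      intro m hm
      induction m, hm using Nat.le_induction with
      | base => intro _; exact hfg
      | succ m hm ih =>
        intro hmk
        have h1 : f m ≤ g m := ih (by omega)
        exact hcross m (by omega) (by omega) h1
    exact absurd (hprop k₀ hjk le_rfl) (not_le.mpr hk₀)
  have hblockf : ∑ k ∈ Ico 0 1, f k + ∑ k ∈ Ico 1 x, f k = ∑ k ∈ Ico 0 x, f k :=
    Finset.sum_Ico_consecutive f (by omega) (by omega)
  have hblockg : ∑ k ∈ Ico 0 1, g k + ∑ k ∈ Ico 1 x, g k = ∑ k ∈ Ico 0 x, g k :=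
    Finset.sum_Ico_consecutive g (by omega) (by omega)
  have hmid : ∑ k ∈ Ico 1 x, g k ≤ ∑ k ∈ Ico 1 x, f k := by
    apply sum_le_sum
    intro i hi
    rw [mem_Ico] at hi
    exact le_of_not_ge (hdown i hi.1 (by omega))
  have hlow : ∑ k ∈ Ico 0 1, g k ≤ ∑ k ∈ Ico 0 1, f k := by
    simpa using h0
  have hsplitf : ∑ k ∈ Ico 0 x, f k + ∑ k ∈ Ico x (N+1), f k = ∑ k ∈ Ico 0 (N+1), f k :=
    Finset.sum_Ico_consecutive f (by omega) (by omega)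
  have hsplitg : ∑ k ∈ Ico 0 x, g k + ∑ k ∈ Ico x (N+1), g k = ∑ k ∈ Ico 0 (N+1), g k :=
    Finset.sum_Ico_consecutive g (by omega) (by omega)
  have hIcc : ∀ h : ℕ → ℝ, ∑ k ∈ Icc x N, h k = ∑ k ∈ Ico x (N+1), h k := by
    intro h; apply Finset.sum_congr _ (fun _ _ => rfl)
    ext k; simp [Nat.lt_succ_iff]
  have hrange : ∀ h : ℕ → ℝ, ∑ k ∈ range (N+1), h k = ∑ k ∈ Ico 0 (N+1), h k := by
    intro h; rw [Finset.range_eq_Ico]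
  rw [hrange f, hrange g] at hsum
  rw [hIcc f, hIcc g]
  linarith


lemma BT.tail_zero (n : ℕ) (p : ℝ) : binomialTail n p 0 = 1 := by
  rw [binomialTail, BT.Icc_zero]; exact BT.sum_pmf n p

lemma BT.tail_one (n : ℕ) (p : ℝ) : binomialTail n p 1 = 1 - (1-p)^n := by
  have h0 := BT.tail_zero n p
  rw [binomialTail] at h0 ⊢
  have : Icc 0 n = insert 0 (Icc 1 n) := by ext k; simp; omega
  rw [this, Finset.sum_insert (by simp)] at h0
  simp only [Nat.choose_zero_right, pow_zero, Nat.sub_zero, Nat.cast_one] at h0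
  linarith

lemma BT.tail_mono_p (n : ℕ) (p p' : ℝ) (hp : 0 < p) (hpp' : p ≤ p') (hp' : p' < 1) :
    ∀ x, binomialTail n p x ≤ binomialTail n p' x := by
  intro x
  have hq : (0:ℝ) < 1 - p := by linarith
  have hq' : (0:ℝ) < 1 - p' := by linarith
  apply BT.single_crossing n
    (fun k => (n.choose k : ℝ) * p ^ k * (1 - p) ^ (n - k))
    (fun k => (n.choose k : ℝ) * p' ^ k * (1 - p') ^ (n - k))
  · intro k _
    exact mul_nonneg (mul_nonneg (by positivity) (pow_nonneg hp.le _)) (pow_nonneg hq.le _)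
  · intro k _
    exact mul_nonneg (mul_nonneg (by positivity) (pow_nonneg (by linarith) _)) (pow_nonneg hq'.le _)
  · rw [BT.sum_pmf, BT.sum_pmf]
  · simp only [Nat.choose_zero_right, pow_zero, Nat.cast_one, one_mul, Nat.sub_zero]
    exact pow_le_pow_left₀ (le_of_lt hq') (by linarith) n
  · intro k _ hk1 hfg
    have recf := BT.pmf_rec n k hk1 p (1-p)
    have recg := BT.pmf_rec n k hk1 p' (1-p')
    have hkq : (0:ℝ) < ((k:ℝ)+1) * (1-p) := by positivity
    have hkq' : (0:ℝ) < ((k:ℝ)+1) * (1-p') := by positivity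
    have hf1 : (n.choose (k+1) : ℝ) * p ^ (k+1) * (1 - p) ^ (n - (k+1))
        = ((n:ℝ) - k) * p * ((n.choose k : ℝ) * p ^ k * (1 - p) ^ (n - k)) / (((k:ℝ)+1) * (1-p)) := by
      field_simp; linarith [recf]
    have hg1 : (n.choose (k+1) : ℝ) * p' ^ (k+1) * (1 - p') ^ (n - (k+1))
        = ((n:ℝ) - k) * p' * ((n.choose k : ℝ) * p' ^ k * (1 - p') ^ (n - k)) / (((k:ℝ)+1) * (1-p')) := by
      field_simp; linarith [recg]
    rw [hf1, hg1]
    have hnk : (0:ℝ) ≤ (n:ℝ) - k := by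
      have : (k:ℝ) + 1 ≤ (n:ℝ) := by exact_mod_cast hk1
      linarith
    have hfk : (0:ℝ) ≤ (n.choose k : ℝ) * p ^ k * (1 - p) ^ (n - k) := by positivity
    have hgk : (0:ℝ) ≤ (n.choose k : ℝ) * p' ^ k * (1 - p') ^ (n - k) :=
      mul_nonneg (mul_nonneg (by positivity) (pow_nonneg (by linarith) _)) (pow_nonneg hq'.le _)
    apply div_le_div₀ (mul_nonneg (mul_nonneg hnk (by linarith)) hgk)
    · have h2 : p * ((n.choose k : ℝ) * p ^ k * (1 - p) ^ (n - k))
          ≤ p' * ((n.choose k : ℝ) * p' ^ k * (1 - p') ^ (n - k)) :=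
        mul_le_mul hpp' hfg hfk (by linarith)
      nlinarith [h2, hnk]
    · exact hkq'
    · exact mul_le_mul_of_nonneg_left (by linarith) (by positivity)

lemma BT.sum_pmf' (n : ℕ) (q : ℝ) :
    ∑ k ∈ range (n+1), (n.choose k : ℝ) * (1-q) ^ k * q ^ (n - k) = 1 := by
  have h := BT.sum_pmf n (1-q)
  simpa [sub_sub_cancel] using h

lemma BT.tail_step (n : ℕ) (hn : 1 ≤ n) (q s : ℝ) (hq : q ∈ Set.Ioo (0:ℝ) 1)
    (hs : s ∈ Set.Ioo (0:ℝ) 1) (hqs : q ^ n = s ^ (n+1)) :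
    ∀ x, binomialTail n (1-q) x ≤ binomialTail (n+1) (1-s) x := by
  obtain ⟨hq0, hq1⟩ := hq
  obtain ⟨hs0, hs1⟩ := hs
  set p : ℝ := 1 - q with hp_def
  set r : ℝ := 1 - s with hr_def
  have hp0 : 0 < p := by simp [hp_def]; linarith
  have hr0 : 0 < r := by simp [hr_def]; linarith
  set f : ℕ → ℝ := fun k => (n.choose k : ℝ) * p ^ k * q ^ (n - k) with hf_def
  set g : ℕ → ℝ := fun k => ((n+1).choose k : ℝ) * r ^ k * s ^ (n + 1 - k) with hg_def
  have fpos : ∀ j, j ≤ n → 0 < f j := by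
    intro j hj
    have : 0 < n.choose j := Nat.choose_pos hj
    have : (0:ℝ) < (n.choose j : ℝ) := by exact_mod_cast this
    positivity
  have gpos : ∀ j, j ≤ n + 1 → 0 < g j := by
    intro j hj
    have : 0 < (n+1).choose j := Nat.choose_pos hj
    have : (0:ℝ) < ((n+1).choose j : ℝ) := by exact_mod_cast this
    positivity
  have f0 : f 0 = q ^ n := by simp [hf_def]
  have g0 : g 0 = s ^ (n+1) := by simp [hg_def]
  have ftop : f (n+1) = 0 := by simp [hf_def, Nat.choose_succ_self]
  -- recurrences
  have recf : ∀ k, k + 1 ≤ n → f (k+1) = ((n:ℝ) - k) * p * f k / (((k:ℝ)+1) * q) := by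
    intro k hk
    have h := BT.pmf_rec n k hk p q
    have hd : (((k:ℝ)+1) * q) ≠ 0 := by positivity
    field_simp [hf_def]
    linarith [h]
  have recg : ∀ k, k + 1 ≤ n + 1 → g (k+1) = ((n:ℝ) + 1 - k) * r * g k / (((k:ℝ)+1) * s) := by
    intro k hk
    have h := BT.pmf_rec (n+1) k hk r s
    push_cast at h
    have hd : (((k:ℝ)+1) * s) ≠ 0 := by positivity
    rw [eq_div_iff hd]
    simp only [hg_def, Nat.add_sub_add_right]
    linear_combination h
  set h : ℕ → ℝ := fun j => g j / f j with hh_def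
  set ρ : ℕ → ℝ := fun j => (((n:ℝ) + 1 - j) * r * q) / ((((n:ℝ)) - j) * p * s) with hρ_def
  have hnk_pos : ∀ k : ℕ, k + 1 ≤ n → (0:ℝ) < (n:ℝ) - k := by
    intro k hk
    have : (k:ℝ) + 1 ≤ (n:ℝ) := by exact_mod_cast hk
    linarith
  have ρpos : ∀ j, j + 1 ≤ n → 0 < ρ j := by
    intro j hj
    have h1 := hnk_pos j hj
    have h2 : (0:ℝ) < (n:ℝ) + 1 - j := by linarith
    simp only [hρ_def]
    positivity
  have ρmono : ∀ i j : ℕ, i ≤ j → j + 1 ≤ n → ρ i ≤ ρ j := by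
    intro i j hij hj
    have hi := hnk_pos i (by omega)
    have hjn := hnk_pos j hj
    have hij' : (i:ℝ) ≤ (j:ℝ) := by exact_mod_cast hij
    simp only [hρ_def]
    rw [div_le_div_iff₀ (by positivity) (by positivity)]
    nlinarith [mul_nonneg (mul_nonneg (mul_nonneg (mul_nonneg hr0.le hq0.le) hp0.le) hs0.le)
      (sub_nonneg.mpr hij')]
  have hstep : ∀ k, k + 1 ≤ n → h (k+1) = ρ k * h k := by
    intro k hk
    have hf1 := recf k hk
    have hg1 := recg k (by omega)
    have hfk := fpos k (by omega)
    have hnk := hnk_pos k hk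
    simp only [hh_def, hρ_def]
    rw [hf1, hg1]
    field_simp
  have h0 : h 0 = 1 := by
    simp only [hh_def]
    rw [f0, g0, hqs, div_self (by positivity)]
  have hC : ∀ k, k + 1 ≤ n → h (k+1) ≤ ρ k ^ (k+1) := by
    intro k
    induction k with
    | zero =>
      intro hk
      rw [hstep 0 hk, h0, mul_one, pow_one]
    | succ m ih =>
      intro hk
      have h1 := ih (by omega)
      have h2 := hstep (m+1) hk
      have hρm := ρpos m (by omega)
      have hρm1 := ρpos (m+1) hk
      have hmono := ρmono m (m+1) (by omega) hk
      calc h (m+2) = ρ (m+1) * h (m+1) := h2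
        _ ≤ ρ (m+1) * ρ m ^ (m+1) := by
            apply mul_le_mul_of_nonneg_left h1 hρm1.le
        _ ≤ ρ (m+1) * ρ (m+1) ^ (m+1) := by
            apply mul_le_mul_of_nonneg_left (pow_le_pow_left₀ hρm.le hmono _) hρm1.le
        _ = ρ (m+1) ^ (m+2) := by ring
  -- the single crossing property
  have hcross : ∀ k, 1 ≤ k → k + 1 ≤ n + 1 → f k ≤ g k → f (k+1) ≤ g (k+1) := by
    intro k hk1 hkn hfg
    rcases Nat.lt_or_ge k n with hkn' | hkn'
    · -- k + 1 ≤ n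
      have hkk : k + 1 ≤ n := hkn'
      obtain ⟨m, rfl⟩ : ∃ m, k = m + 1 := ⟨k - 1, by omega⟩
      have hhk : 1 ≤ h (m+1) := (one_le_div (fpos (m+1) (by omega))).mpr hfg
      have hCk := hC m (by omega)
      have hmono := ρmono m (m+1) (by omega) hkk
      have hρm := ρpos m (by omega)
      have hρk := ρpos (m+1) hkk
      have hup : h (m+1) ≤ ρ (m+1) ^ (m+1) :=
        le_trans hCk (pow_le_pow_left₀ hρm.le hmono _)
      have hρ1 : 1 ≤ ρ (m+1) := by
        by_contra hlt
        push_neg at hlt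
        have : ρ (m+1) ^ (m+1) < 1 := pow_lt_one₀ hρk.le hlt (by omega)
        linarith
      have : 1 ≤ h (m+2) := by
        rw [hstep (m+1) hkk]
        nlinarith
      exact (one_le_div (fpos (m+2) (by omega))).mp this
    · -- k = n, so f (k+1) = 0
      have hkeq : k = n := by omega
      rw [hkeq, ftop]
      exact (gpos (n+1) le_rfl).le
  -- apply single crossing
  intro x
  have main := BT.single_crossing (n+1) f g
    (fun k _ => by rcases Nat.lt_or_ge k (n+1) with hh | hh
                   · exact (fpos k (by omega)).le
                   · have : k = n + 1 := by omega
                     rw [this, ftop])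
    (fun k hk => (gpos k hk).le)
    (by rw [Finset.sum_range_succ, ftop, add_zero]
        simp only [hf_def, hg_def, hp_def, hr_def]
        rw [BT.sum_pmf' n q, BT.sum_pmf' (n+1) s])
    (by rw [f0, g0, hqs])
    hcross x
  have step1 : binomialTail n p x = ∑ k ∈ Icc x n, f k := by
    simp only [binomialTail, hf_def, hp_def, sub_sub_cancel]
  have step2 : ∑ k ∈ Icc x n, f k ≤ ∑ k ∈ Icc x (n+1), f k := by
    apply Finset.sum_le_sum_of_subset_of_nonneg
    · intro k hk; rw [mem_Icc] at *; omega
    · intro k hk _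
      rw [mem_Icc] at hk
      rcases Nat.lt_or_ge k (n+1) with hh | hh
      · exact (fpos k (by omega)).le
      · have : k = n + 1 := by omega
        rw [this, ftop]
  have step3 : binomialTail (n+1) (1-s) x = ∑ k ∈ Icc x (n+1), g k := by
    simp only [binomialTail, hg_def, hr_def, sub_sub_cancel]
  rw [step1, step3]
  exact le_trans step2 main

/-- For positive integers `n₁ ≤ n₂` and `p₁, p₂ ∈ (0,1)`, `Bin(n₁,p₁)` is stochastically
dominated by `Bin(n₂,p₂)` iff `n₁ ≤ n₂` and `(1-p₁)^{n₁} ≥ (1-p₂)^{n₂}`. -/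
theorem binomial_stochastic_domination_iff
    (n₁ n₂ : ℕ) (hn₁ : 0 < n₁) (hn₂ : 0 < n₂) (hn : n₁ ≤ n₂)
    (p₁ p₂ : ℝ) (hp₁ : p₁ ∈ Set.Ioo (0:ℝ) 1) (hp₂ : p₂ ∈ Set.Ioo (0:ℝ) 1) :
    (∀ x : ℕ, binomialTail n₁ p₁ x ≤ binomialTail n₂ p₂ x) ↔
      (n₁ ≤ n₂ ∧ (1 - p₂) ^ n₂ ≤ (1 - p₁) ^ n₁) := by
  obtain ⟨hp₁0, hp₁1⟩ := hp₁
  obtain ⟨hp₂0, hp₂1⟩ := hp₂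
  have hq₁0 : (0:ℝ) < 1 - p₁ := by linarith
  have hq₁1 : 1 - p₁ < 1 := by linarith
  have hq₂0 : (0:ℝ) < 1 - p₂ := by linarith
  constructor
  · intro hdom
    refine ⟨hn, ?_⟩
    have h1 := hdom 1
    rw [BT.tail_one, BT.tail_one] at h1
    linarith
  · rintro ⟨-, hpow⟩
    intro x
    set q₁ : ℝ := 1 - p₁ with hq₁_def
    have chain : ∀ m, n₁ ≤ m → ∀ y, binomialTail n₁ p₁ y ≤
        binomialTail m (1 - q₁ ^ ((n₁:ℝ)/(m:ℝ))) y := by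
      intro m hm
      induction m, hm using Nat.le_induction with
      | base =>
        intro y
        have hd : (n₁:ℝ)/(n₁:ℝ) = 1 := div_self (by positivity)
        rw [hd, Real.rpow_one]
        simp only [hq₁_def, sub_sub_cancel, le_refl]
      | succ m hm ih =>
        intro y
        refine le_trans (ih y) ?_
        have hm1 : (0:ℝ) < (m:ℝ) := by
          have : 0 < m := by omega
          exact_mod_cast this
        have hm2 : (0:ℝ) < (m:ℝ) + 1 := by linarith
        have hn₁pos : (0:ℝ) < (n₁:ℝ) := by exact_mod_cast hn₁
        have hqmem : q₁ ^ ((n₁:ℝ)/(m:ℝ)) ∈ Set.Ioo (0:ℝ) 1 :=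
          ⟨Real.rpow_pos_of_pos hq₁0 _,
           Real.rpow_lt_one hq₁0.le hq₁1 (by positivity)⟩
        have hsmem : q₁ ^ ((n₁:ℝ)/((m:ℝ)+1)) ∈ Set.Ioo (0:ℝ) 1 :=
          ⟨Real.rpow_pos_of_pos hq₁0 _,
           Real.rpow_lt_one hq₁0.le hq₁1 (by positivity)⟩
        have hqs : (q₁ ^ ((n₁:ℝ)/(m:ℝ))) ^ m = (q₁ ^ ((n₁:ℝ)/((m:ℝ)+1))) ^ (m+1) := by
          rw [← Real.rpow_natCast (q₁ ^ ((n₁:ℝ)/(m:ℝ))) m,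
              ← Real.rpow_natCast (q₁ ^ ((n₁:ℝ)/((m:ℝ)+1))) (m+1),
              ← Real.rpow_mul hq₁0.le, ← Real.rpow_mul hq₁0.le]
          congr 1
          push_cast
          field_simp
        have := BT.tail_step m (by omega) _ _ hqmem hsmem hqs y
        convert this using 3
        · rfl
        push_cast
        ring
    have hlast := chain n₂ hn x
    refine le_trans hlast ?_
    set t : ℝ := q₁ ^ ((n₁:ℝ)/(n₂:ℝ)) with ht_def
    have hn₂pos : (0:ℝ) < (n₂:ℝ) := by exact_mod_cast hn₂
    have hn₁pos : (0:ℝ) < (n₁:ℝ) := by exact_mod_cast hn₁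
    have htmem : t ∈ Set.Ioo (0:ℝ) 1 :=
      ⟨Real.rpow_pos_of_pos hq₁0 _, Real.rpow_lt_one hq₁0.le hq₁1 (by positivity)⟩
    have htpow : t ^ n₂ = q₁ ^ n₁ := by
      rw [ht_def, ← Real.rpow_natCast (q₁ ^ ((n₁:ℝ)/(n₂:ℝ))) n₂, ← Real.rpow_mul hq₁0.le,
          ← Real.rpow_natCast q₁ n₁]
      congr 1
      field_simp
    have hq₂t : 1 - p₂ ≤ t := by
      apply le_of_pow_le_pow_left₀ (n := n₂) (by omega) htmem.1.le
      rw [htpow]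
      exact hpow
    exact BT.tail_mono_p n₂ (1 - t) p₂ (by linarith [htmem.2]) (by linarith) hp₂1 x
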